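/- Let n and k be positive integers and let s, t : Fin k → EuclideanSpace ℝ (Fin n). Then ⟪s i, s j⟫ = ⟪t i, t j⟫ for all i, j ∈ Fin k if and only if there exists g ∈ O(n) such that s i = g (t i) for all i. In other words, two k-tuples of vectors in ℝ^n have equal Gram matrices if and only if they are related by a single orthogonal transformation. -/

import Mathlib

open RealInnerProductSpace

/-- Two `k`-tuples of vectors in `ℝⁿ` have equal Gram matrices if and only if
they are related by a single orthogonal transformation of `ℝⁿ`. -/
theorem gram_eq_iff_exists_orthogonal {n k : ℕ} (hn : 0 < n) (hk : 0 < k)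
    (s t : Fin k → EuclideanSpace ℝ (Fin n)) :
    (∀ i j : Fin k, ⟪s i, s j⟫ = ⟪t i, t j⟫) ↔
      ∃ g : EuclideanSpace ℝ (Fin n) ≃ₗᵢ[ℝ] EuclideanSpace ℝ (Fin n),
        ∀ i : Fin k, s i = g (t i) := by
  constructor
  · intro h
    let E := EuclideanSpace ℝ (Fin n)
    -- linear maps sending coefficients to combinations
    let T : (Fin k → ℝ) →ₗ[ℝ] E :=
      { toFun := fun c => ∑ i, c i • t i
        map_add' := by intro a b; simp [add_smul, Finset.sum_add_distrib]
        map_smul' := by intro r a; simp [smul_smul, Finset.smul_sum] }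
    let S : (Fin k → ℝ) →ₗ[ℝ] E :=
      { toFun := fun c => ∑ i, c i • s i
        map_add' := by intro a b; simp [add_smul, Finset.sum_add_distrib]
        map_smul' := by intro r a; simp [smul_smul, Finset.smul_sum] }
    have hnorm : ∀ c : Fin k → ℝ, ‖S c‖ = ‖T c‖ := by
      intro c
      have hS : ⟪S c, S c⟫ = ⟪T c, T c⟫ := by
        show ⟪∑ i, c i • s i, ∑ i, c i • s i⟫ = ⟪∑ i, c i • t i, ∑ i, c i • t i⟫
        simp only [S, T, LinearMap.coe_mk, AddHom.coe_mk, sum_inner, inner_sum,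
          real_inner_smul_left, real_inner_smul_right]
        exact Finset.sum_congr rfl fun i _ => Finset.sum_congr rfl fun j _ => by rw [h j i]
      have := congrArg Real.sqrt hS
      rwa [real_inner_self_eq_norm_sq, real_inner_self_eq_norm_sq,
        Real.sqrt_sq (norm_nonneg _), Real.sqrt_sq (norm_nonneg _)] at this
    have hker : LinearMap.ker T ≤ LinearMap.ker S := by
      intro c hc
      rw [LinearMap.mem_ker] at hc ⊢
      have := hnorm c
      rw [hc, norm_zero] at this
      exact norm_eq_zero.mp this
    -- map on the range of T
    let f : LinearMap.range T →ₗ[ℝ] E :=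
      ((LinearMap.ker T).liftQ S hker).comp T.quotKerEquivRange.symm.toLinearMap
    have hf : ∀ c : Fin k → ℝ, f ⟨T c, LinearMap.mem_range_self T c⟩ = S c := by
      intro c
      have : T.quotKerEquivRange.symm ⟨T c, LinearMap.mem_range_self T c⟩ =
          Submodule.Quotient.mk c := by
        apply T.quotKerEquivRange.injective
        simp [LinearMap.quotKerEquivRange_apply_mk]
      simp only [f, LinearMap.coe_comp, Function.comp_apply, LinearEquiv.coe_coe, this]
      rfl
    have hfn : ∀ x : LinearMap.range T, ‖f x‖ = ‖x‖ := by
      rintro ⟨x, c, rfl⟩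
      rw [hf c, hnorm c]
      rfl
    let L : (LinearMap.range T) →ₗᵢ[ℝ] E := ⟨f, hfn⟩
    let L' := L.extend
    have hdim : Module.finrank ℝ E = Module.finrank ℝ E := rfl
    refine ⟨L'.toLinearIsometryEquiv hdim, fun i => ?_⟩
    have hti : t i ∈ LinearMap.range T := by
      refine ⟨Pi.single i 1, ?_⟩
      simp [T, Pi.single_apply, ite_smul]
    have hLi : L' (t i) = s i := by
      have : L ⟨t i, hti⟩ = s i := by
        have h1 : (⟨t i, hti⟩ : LinearMap.range T) =
            ⟨T (Pi.single i 1), LinearMap.mem_range_self T _⟩ := by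
          ext
          simp [T, Pi.single_apply, ite_smul]
        show f ⟨t i, hti⟩ = s i
        rw [h1, hf]
        simp [S, Pi.single_apply, ite_smul]
      rw [show (t i) = ((⟨t i, hti⟩ : LinearMap.range T) : E) from rfl,
        L.extend_apply, this]
    rw [LinearIsometry.toLinearIsometryEquiv_apply, hLi]
  · rintro ⟨g, hg⟩ i j
    rw [hg i, hg j, g.inner_map_map]
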